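/- Let r ≥ 1, b ∈ N_r, and B ⊆ supp(b). Then m_{C(b,B)} = m^b · Π_{j∈B} Π_{x} x, where the inner product runs over those variables x ∈ {x_1,…,x_n} that divide m_{τ(j)} but do not divide m_j; equivalently, m_{C(b,B)} = m^b · Π_{j∈B} (m_{τ(j)}/gcd(m_j, m_{τ(j)})). -/

import Mathlib

open Finset MvPolynomial

noncomputable section

/-- The standard basis vector `f_i` of `ℤ_{≥0}^{q+1}` (as a function `ℕ → ℕ`). -/
def fvec (i : ℕ) : ℕ → ℕ := fun j => if j = i then 1 else 0

/-- `a ∈ N_r`: a vector in `ℤ_{≥0}^{q+1}` whose coordinates sum to `r`. -/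
def Nr (q r : ℕ) (a : ℕ → ℕ) : Prop :=
  (∀ j, q < j → a j = 0) ∧ ∑ j ∈ Finset.range (q + 1), a j = r

/-- The support `supp(a) = {j ∈ {1,…,q} : a_j ≠ 0}`. -/
def suppv (q : ℕ) (a : ℕ → ℕ) : Finset ℕ := (Finset.Icc 1 q).filter (fun j => a j ≠ 0)

/-- `b − Σ_{j∈B'}(f_j − f_{τ(j)})` (valid in `ℕ` whenever `B' ⊆ supp(b)`). -/
def moveSet (τ : ℕ → ℕ) (b : ℕ → ℕ) (B' : Finset ℕ) : ℕ → ℕ :=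
  fun j => b j + (∑ i ∈ B', fvec (τ i) j) - ∑ i ∈ B', fvec i j

/-- The square-free monomial with support `S` in `R = k[x_1,…,x_n]`. -/
def mon (k : Type) [Field k] (n : ℕ) (S : Finset (Fin n)) : MvPolynomial (Fin n) k :=
  ∏ x ∈ S, X x

/-- The monomial `m^a = m_0^{a_0} ⋯ m_q^{a_q}`. -/
def mPow (k : Type) [Field k] (n q : ℕ) (S : ℕ → Finset (Fin n)) (a : ℕ → ℕ) :
    MvPolynomial (Fin n) k :=
  ∏ i ∈ Finset.range (q + 1), (mon k n (S i)) ^ (a i)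

/-- The exponent vector of the monomial `m^c`. -/
def expOf (n q : ℕ) (S : ℕ → Finset (Fin n)) (c : ℕ → ℕ) : Fin n → ℕ :=
  fun x => ∑ i ∈ Finset.range (q + 1), c i * (if x ∈ S i then 1 else 0)

/-- `m_{C(b,B)}`: the least common multiple of the monomials `m^c` over all
`c = b − Σ_{j∈B'}(f_j − f_{τ(j)})` with `B' ⊆ B` (computed as the monomial whose
exponent vector is the supremum of the exponent vectors). -/
def mC (k : Type) [Field k] (n q : ℕ) (S : ℕ → Finset (Fin n)) (τ : ℕ → ℕ)
    (b : ℕ → ℕ) (B : Finset ℕ) : MvPolynomial (Fin n) k :=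
  monomial (Finsupp.equivFunOnFinite.symm
    fun x => B.powerset.sup fun B' => expOf n q S (moveSet τ b B') x) 1

/-- The map `π : R^{q+1} → R` sending the `i`-th basis vector to `m_i`. -/
def piMap (k : Type) [Field k] (n q : ℕ) (S : ℕ → Finset (Fin n)) :
    (Fin (q + 1) → MvPolynomial (Fin n) k) →ₗ[MvPolynomial (Fin n) k]
      MvPolynomial (Fin n) k :=
  ∑ i : Fin (q + 1), (LinearMap.proj i).smulRight (mon k n (S i.1))

/-- `i` as an element of `Fin (q+1)` (for `i ≤ q`). -/
def fi (q i : ℕ) : Fin (q + 1) := ⟨i % (q + 1), Nat.mod_lt _ (Nat.succ_pos q)⟩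

/-- The syzygy `(lcm(m_i, m_{τ(i)})/m_i)·ε_i − (lcm(m_i, m_{τ(i)})/m_{τ(i)})·ε_{τ(i)}`. -/
def syzV (k : Type) [Field k] (n q : ℕ) (S : ℕ → Finset (Fin n)) (τ : ℕ → ℕ) (i : ℕ) :
    Fin (q + 1) → MvPolynomial (Fin n) k :=
  fun l =>
    (if l = fi q i then ∏ x ∈ S (τ i) \ S i, X x else 0)
      - (if l = fi q (τ i) then ∏ x ∈ S i \ S (τ i), X x else 0)

/-- Minimal generation: no `m_i` divides `m_j` for `i ≠ j`. -/
def MinGen (n q : ℕ) (S : ℕ → Finset (Fin n)) : Prop :=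
  ∀ i ≤ q, ∀ j ≤ q, i ≠ j → ¬ S i ⊆ S j

/-- The Faridi–Hersey property of the rooted labeled tree given by `τ`: the first syzygy
module of `(m_0,…,m_q)` is generated by the `q` syzygies coming from the edges. -/
def TreeSyz (k : Type) [Field k] (n q : ℕ) (S : ℕ → Finset (Fin n)) (τ : ℕ → ℕ) : Prop :=
  LinearMap.ker (piMap k n q S)
    = Submodule.span (MvPolynomial (Fin n) k)
        {v | ∃ i ∈ Finset.Icc 1 q, v = syzV k n q S τ i}


section Aux
variable {k : Type} [Field k] {n q : ℕ}

theorem exchange6 (n q : ℕ) (S : ℕ → Finset (Fin n)) (τ : ℕ → ℕ)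
    (hτ : ∀ i, 1 ≤ i → i ≤ q → τ i < i) (b : ℕ → ℕ)
    (B' : Finset ℕ) (hB' : B' ⊆ suppv q b) (x : Fin n) :
    expOf n q S (moveSet τ b B') x + ∑ i ∈ B', (if x ∈ S i then 1 else 0)
      = expOf n q S b x + ∑ i ∈ B', (if x ∈ S (τ i) then 1 else 0) := by
  classical
  set w : ℕ → ℕ := fun j => if x ∈ S j then 1 else 0 with hw
  have hrange : B' ⊆ Finset.range (q + 1) := fun j hj => by
    have := hB' hj; simp [suppv, Finset.mem_Icc] at this
    exact Finset.mem_range.mpr (by omega)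
  have h1 : ∑ j ∈ Finset.range (q+1), (if j ∈ B' then 1 else 0) * w j = ∑ i ∈ B', w i := by
    calc ∑ j ∈ Finset.range (q+1), (if j ∈ B' then 1 else 0) * w j
        = ∑ j ∈ Finset.range (q+1), (if j ∈ B' then w j else 0) :=
          Finset.sum_congr rfl (fun j _ => by split <;> simp)
      _ = ∑ j ∈ Finset.range (q+1) ∩ B', w j := Finset.sum_ite_mem _ _ _
      _ = ∑ i ∈ B', w i := by rw [Finset.inter_eq_right.mpr hrange]
  have h2 : ∑ j ∈ Finset.range (q+1), (∑ i ∈ B', fvec (τ i) j) * w j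
      = ∑ i ∈ B', w (τ i) := by
    calc ∑ j ∈ Finset.range (q+1), (∑ i ∈ B', fvec (τ i) j) * w j
        = ∑ j ∈ Finset.range (q+1), ∑ i ∈ B', fvec (τ i) j * w j :=
          Finset.sum_congr rfl fun j _ => Finset.sum_mul ..
      _ = ∑ i ∈ B', ∑ j ∈ Finset.range (q+1), fvec (τ i) j * w j := Finset.sum_comm
      _ = ∑ i ∈ B', w (τ i) := by
          refine Finset.sum_congr rfl fun i hi => ?_
          have hi' : τ i ∈ Finset.range (q + 1) := by
            have := hB' hi; simp [suppv, Finset.mem_Icc] at this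
            have := hτ i this.1.1 this.1.2
            exact Finset.mem_range.mpr (by omega)
          calc ∑ j ∈ Finset.range (q+1), fvec (τ i) j * w j
              = ∑ j ∈ Finset.range (q+1), (if j = τ i then w j else 0) :=
                Finset.sum_congr rfl fun j _ => by simp only [fvec]; split <;> simp
            _ = w (τ i) := by
                rw [Finset.sum_ite_eq' (Finset.range (q+1)) (τ i) w, if_pos hi']
  have sumfvec : ∀ j : ℕ, ∑ i ∈ B', fvec i j = if j ∈ B' then 1 else 0 := fun j => by
    simp [fvec, Finset.sum_ite_eq]
  have key : ∀ j ∈ Finset.range (q+1),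
      moveSet τ b B' j * w j + (if j ∈ B' then 1 else 0) * w j
        = b j * w j + (∑ i ∈ B', fvec (τ i) j) * w j := by
    intro j _
    have hms : moveSet τ b B' j = b j + (∑ i ∈ B', fvec (τ i) j)
        - (if j ∈ B' then 1 else 0) := by rw [moveSet, sumfvec]
    by_cases hj : j ∈ B'
    · have hbj : 1 ≤ b j := by
        have := hB' hj; simp [suppv] at this; omega
      by_cases hx : x ∈ S j <;> simp only [hms, if_pos hj, hw, hx, if_pos, if_neg,
        if_true, if_false, ite_true, ite_false] <;> omega
    · simp only [hms, if_neg hj, Nat.sub_zero, add_mul, zero_mul, add_zero]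
  calc expOf n q S (moveSet τ b B') x + ∑ i ∈ B', w i
      = ∑ j ∈ Finset.range (q+1), (moveSet τ b B' j * w j + (if j ∈ B' then 1 else 0) * w j) := by
        rw [expOf, Finset.sum_add_distrib, h1]
    _ = ∑ j ∈ Finset.range (q+1), (b j * w j + (∑ i ∈ B', fvec (τ i) j) * w j) :=
        Finset.sum_congr rfl key
    _ = expOf n q S b x + ∑ i ∈ B', w (τ i) := by
        rw [Finset.sum_add_distrib, expOf, h2]

theorem supEq6 (n q : ℕ) (S : ℕ → Finset (Fin n)) (τ : ℕ → ℕ)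
    (hτ : ∀ i, 1 ≤ i → i ≤ q → τ i < i) (b : ℕ → ℕ)
    (B : Finset ℕ) (hB : B ⊆ suppv q b) (x : Fin n) :
    (B.powerset.sup fun B' => expOf n q S (moveSet τ b B') x)
      = expOf n q S b x + ∑ j ∈ B, (if x ∈ S (τ j) \ S j then 1 else 0) := by
  classical
  apply le_antisymm
  · apply Finset.sup_le
    intro B' hB'p
    have hB's : B' ⊆ B := Finset.mem_powerset.mp hB'p
    have hex := exchange6 n q S τ hτ b B' (hB's.trans hB) x
    have hP : ∑ i ∈ B', (if x ∈ S (τ i) then 1 else 0)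
        ≤ (∑ j ∈ B, (if x ∈ S (τ j) \ S j then 1 else 0))
          + ∑ i ∈ B', (if x ∈ S i then 1 else 0) := by
      calc ∑ i ∈ B', (if x ∈ S (τ i) then 1 else 0)
          ≤ ∑ i ∈ B', ((if x ∈ S (τ i) \ S i then 1 else 0) + (if x ∈ S i then 1 else 0)) := by
            refine Finset.sum_le_sum fun i _ => ?_
            by_cases h1 : x ∈ S (τ i) <;> by_cases h2 : x ∈ S i <;>
              simp [Finset.mem_sdiff, h1, h2]
        _ = (∑ i ∈ B', (if x ∈ S (τ i) \ S i then 1 else 0))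
            + ∑ i ∈ B', (if x ∈ S i then 1 else 0) := Finset.sum_add_distrib
        _ ≤ _ := Nat.add_le_add_right (Finset.sum_le_sum_of_subset hB's) _
    omega
  · set B0 := B.filter (fun j => x ∈ S (τ j) \ S j) with hB0
    have hsub : B0 ⊆ B := Finset.filter_subset _ _
    have hmem : B0 ∈ B.powerset := Finset.mem_powerset.mpr hsub
    refine le_trans ?_ (Finset.le_sup hmem)
    have hex := exchange6 n q S τ hτ b B0 (hsub.trans hB) x
    have hM : ∑ i ∈ B0, (if x ∈ S i then 1 else 0) = 0 := by
      refine Finset.sum_eq_zero fun i hi => ?_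
      have : x ∈ S (τ i) \ S i := (Finset.mem_filter.mp hi).2
      simp [Finset.mem_sdiff] at this
      simp [this.2]
    have hP : ∑ i ∈ B0, (if x ∈ S (τ i) then 1 else 0)
        = ∑ j ∈ B, (if x ∈ S (τ j) \ S j then 1 else 0) := by
      rw [hB0, Finset.sum_filter]
      refine Finset.sum_congr rfl fun j _ => ?_
      by_cases h : x ∈ S (τ j) \ S j
      · simp [h, (Finset.mem_sdiff.mp h).1]
      · simp [h]
    omega

theorem monomial_prod6 {ι : Type*} (s : Finset ι) (f : ι → (Fin n →₀ ℕ)) :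
    ∏ i ∈ s, (monomial (f i) (1 : k)) = monomial (∑ i ∈ s, f i) 1 := by
  classical
  induction s using Finset.induction_on with
  | empty => simp
  | insert _ _ h ih => rw [Finset.prod_insert h, Finset.sum_insert h, ih, monomial_mul, one_mul]

theorem prodX_eq6 (T : Finset (Fin n)) :
    ∏ x ∈ T, (X x : MvPolynomial (Fin n) k)
      = monomial (∑ x ∈ T, Finsupp.single x 1) 1 := by
  classical
  induction T using Finset.induction_on with
  | empty => simp
  | insert _ _ h ih => rw [Finset.prod_insert h, Finset.sum_insert h, ih, X, monomial_mul, one_mul]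

theorem mPow_eq6 (S : ℕ → Finset (Fin n)) (b : ℕ → ℕ) :
    mPow k n q S b
      = monomial (∑ i ∈ Finset.range (q+1), b i • ∑ x ∈ S i, Finsupp.single x 1) 1 := by
  rw [mPow, ← monomial_prod6]
  exact Finset.prod_congr rfl fun i _ => by
    rw [mon, prodX_eq6, monomial_pow, one_pow]

theorem evalSingleSum (T : Finset (Fin n)) (x : Fin n) :
    (∑ y ∈ T, Finsupp.single y (1:ℕ)) x = if x ∈ T then 1 else 0 := by
  classical
  simp [Finset.sum_apply', Finsupp.single_apply, Finset.sum_ite_eq']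

theorem evalDouble (B : Finset ℕ) (T : ℕ → Finset (Fin n)) (x : Fin n) :
    (∑ j ∈ B, ∑ y ∈ T j, Finsupp.single y (1:ℕ)) x
      = ∑ j ∈ B, (if x ∈ T j then 1 else 0) := by
  rw [Finset.sum_apply']
  exact Finset.sum_congr rfl fun j _ => evalSingleSum _ _

theorem evalEf (S : ℕ → Finset (Fin n)) (b : ℕ → ℕ) (x : Fin n) :
    (∑ i ∈ Finset.range (q+1), b i • ∑ y ∈ S i, Finsupp.single y (1:ℕ)) x
      = expOf n q S b x := by
  rw [Finset.sum_apply', expOf]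
  refine Finset.sum_congr rfl fun i _ => ?_
  rw [Finsupp.smul_apply, smul_eq_mul, evalSingleSum]

end Aux

/-- `m_{C(b,B)} = m^b · Π_{j∈B} Π_{x | m_{τ(j)}, x ∤ m_j} x`; equivalently
`m_{C(b,B)} = m^b · Π_{j∈B} (m_{τ(j)} / gcd(m_j, m_{τ(j)}))`, written here without
division as `m_{C(b,B)} · Π_{j∈B} gcd(m_j, m_{τ(j)}) = m^b · Π_{j∈B} m_{τ(j)}`. -/
theorem statement6 (k : Type) [Field k] (n q : ℕ) (hq : 1 ≤ q)
    (S : ℕ → Finset (Fin n)) (hmin : MinGen n q S)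
    (τ : ℕ → ℕ) (hτ : ∀ i, 1 ≤ i → i ≤ q → τ i < i)
    (hsyz : TreeSyz k n q S τ)
    (r : ℕ) (hr : 1 ≤ r) (b : ℕ → ℕ) (hb : Nr q r b)
    (B : Finset ℕ) (hB : B ⊆ suppv q b) :
    mC k n q S τ b B
      = mPow k n q S b * ∏ j ∈ B, ∏ x ∈ S (τ j) \ S j, X x ∧
    mC k n q S τ b B * ∏ j ∈ B, ∏ x ∈ S j ∩ S (τ j), X x
      = mPow k n q S b * ∏ j ∈ B, mon k n (S (τ j)) := by
  classical
  have hsup := supEq6 n q S τ hτ b B hB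
  have hD : (∏ j ∈ B, ∏ x ∈ S (τ j) \ S j, (X x : MvPolynomial (Fin n) k))
      = monomial (∑ j ∈ B, ∑ x ∈ S (τ j) \ S j, Finsupp.single x 1) 1 := by
    rw [← monomial_prod6]; exact Finset.prod_congr rfl fun j _ => prodX_eq6 _
  have hI : (∏ j ∈ B, ∏ x ∈ S j ∩ S (τ j), (X x : MvPolynomial (Fin n) k))
      = monomial (∑ j ∈ B, ∑ x ∈ S j ∩ S (τ j), Finsupp.single x 1) 1 := by
    rw [← monomial_prod6]; exact Finset.prod_congr rfl fun j _ => prodX_eq6 _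
  have hT : (∏ j ∈ B, mon k n (S (τ j)))
      = monomial (∑ j ∈ B, ∑ x ∈ S (τ j), Finsupp.single x 1) 1 := by
    rw [← monomial_prod6]
    exact Finset.prod_congr rfl fun j _ => by rw [mon, prodX_eq6]
  constructor
  · rw [mC, mPow_eq6, hD, monomial_mul, mul_one]
    refine congrArg (fun u => monomial u (1:k)) ?_
    ext x
    rw [Finsupp.add_apply, evalEf, evalDouble]
    simpa using hsup x
  · rw [mC, mPow_eq6, hI, hT, monomial_mul, monomial_mul, mul_one]
    refine congrArg (fun u => monomial u (1:k)) ?_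
    ext x
    rw [Finsupp.add_apply, Finsupp.add_apply, evalEf, evalDouble, evalDouble]
    have hx : (Finsupp.equivFunOnFinite.symm
        fun x => B.powerset.sup fun B' => expOf n q S (moveSet τ b B') x) x
        = expOf n q S b x + ∑ j ∈ B, (if x ∈ S (τ j) \ S j then 1 else 0) := by
      simpa using hsup x
    rw [hx]
    have hsplit : ∀ j ∈ B, (if x ∈ S (τ j) then (1:ℕ) else 0)
        = (if x ∈ S (τ j) \ S j then 1 else 0) + (if x ∈ S j ∩ S (τ j) then 1 else 0) := by
      intro j _
      by_cases h1 : x ∈ S (τ j) <;> by_cases h2 : x ∈ S j <;>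
        simp [Finset.mem_sdiff, Finset.mem_inter, h1, h2]
    rw [Finset.sum_congr rfl hsplit, Finset.sum_add_distrib]
    omega


end
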